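/- Let (n_k)_{k≥0} be functions on [0,1] and (A_k, V_k) satisfy the discrete relation (n_{k+1} − n_k)/Δt + ∇·(n_k ∇(A_{k+1} − V_{k+1})) = 0 in the weak sense. Suppose sup_k ‖n_k‖_{L^∞} ≤ M and Δt Σ_{j≥0} ‖√(n_j) ∇(A_{j+1}−V_{j+1})‖²_{L²} ≤ E. Then for any integers k₁ < k₂ and any φ ∈ H¹_per, |∫(n_{k₂} − n_{k₁})φ dx| ≤ √M √E √((k₂−k₁)Δt) ‖∇φ‖_{L²}; hence ‖n_{k₂} − n_{k₁}‖_{H⁻¹_per} ≤ √(ME) √((k₂−k₁)Δt). -/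

import Mathlib

open MeasureTheory intervalIntegral

lemma telescope_Ico (F : ℕ → ℝ) (m nn : ℕ) (h : m ≤ nn) :
    ∑ p ∈ Finset.Ico m nn, (F (p+1) - F p) = F nn - F m := by
  rw [Finset.sum_Ico_eq_sum_range]
  induction nn, h using Nat.le_induction with
  | base => simp
  | succ nn hmn ih =>
      rw [Nat.succ_sub hmn, Finset.sum_range_succ, ih]
      have : m + (nn - m) = nn := Nat.add_sub_cancel' hmn
      rw [this]; ring

lemma integral_cs (f g : ℝ → ℝ) (hf : Continuous f) (hg : Continuous g) :
    (∫ x in (0:ℝ)..1, f x * g x) ^ 2 ≤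
      (∫ x in (0:ℝ)..1, f x ^ 2) * (∫ x in (0:ℝ)..1, g x ^ 2) := by
  set A := ∫ x in (0:ℝ)..1, g x ^ 2
  set B := ∫ x in (0:ℝ)..1, f x * g x
  set C := ∫ x in (0:ℝ)..1, f x ^ 2
  have key : ∀ t : ℝ, 0 ≤ A * (t * t) + (2 * B) * t + C := by
    intro t
    have h1 : (0:ℝ) ≤ ∫ x in (0:ℝ)..1, (f x + t * g x) ^ 2 :=
      intervalIntegral.integral_nonneg zero_le_one (fun x _ => sq_nonneg _)
    have h2 : (∫ x in (0:ℝ)..1, (f x + t * g x) ^ 2) =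
        A * (t * t) + (2 * B) * t + C := by
      have e : ∀ x : ℝ, (f x + t * g x) ^ 2 =
          (t * t) * (g x ^ 2) + (2 * t) * (f x * g x) + f x ^ 2 := by
        intro x; ring
      simp only [e]
      rw [intervalIntegral.integral_add, intervalIntegral.integral_add,
        intervalIntegral.integral_const_mul, intervalIntegral.integral_const_mul]
      · ring
      · exact (continuous_const.mul (hg.pow 2)).intervalIntegrable _ _
      · exact (continuous_const.mul (hf.mul hg)).intervalIntegrable _ _
      · exact ((continuous_const.mul (hg.pow 2)).add
          (continuous_const.mul (hf.mul hg))).intervalIntegrable _ _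
      · exact (hf.pow 2).intervalIntegrable _ _
    linarith [h2 ▸ h1]
  have := discrim_le_zero key
  rw [discrim] at this
  nlinarith [this]

theorem stmt13 (n : ℕ → ℝ → ℝ) (w dw : ℕ → ℝ → ℝ) (Δt M E : ℝ)
    (hΔt : 0 < Δt) (hM : 0 ≤ M) (hE : 0 ≤ E)
    (hncont : ∀ k, Continuous (n k))
    (hnper : ∀ k, Function.Periodic (n k) 1)
    (hnpos : ∀ k x, 0 ≤ n k x) (hnbound : ∀ k x, n k x ≤ M)
    (hw : ∀ k x, HasDerivAt (w k) (dw k x) x)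
    (hdwcont : ∀ k, Continuous (dw k))
    (hwper : ∀ k, Function.Periodic (w k) 1)
    -- weak form of the scheme:
    (hscheme : ∀ k : ℕ, ∀ φ dφ : ℝ → ℝ,
      (∀ x, HasDerivAt φ (dφ x) x) → Function.Periodic φ 1 → Continuous dφ →
      (∫ x in (0:ℝ)..1, (n (k+1) x - n k x) * φ x) / Δt =
        ∫ x in (0:ℝ)..1, n k x * dw (k+1) x * dφ x)
    -- dissipation bound:
    (hdissip : Δt * (∑' j : ℕ, ∫ x in (0:ℝ)..1, n j x * (dw (j+1) x) ^ 2) ≤ E)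
    (hdissum : Summable (fun j : ℕ => ∫ x in (0:ℝ)..1, n j x * (dw (j+1) x) ^ 2)) :
    ∀ k₁ k₂ : ℕ, k₁ < k₂ → ∀ φ dφ : ℝ → ℝ,
      (∀ x, HasDerivAt φ (dφ x) x) → Function.Periodic φ 1 → Continuous dφ →
      |∫ x in (0:ℝ)..1, (n k₂ x - n k₁ x) * φ x| ≤
        Real.sqrt M * Real.sqrt E * Real.sqrt ((k₂ - k₁ : ℝ) * Δt) *
          Real.sqrt (∫ x in (0:ℝ)..1, (dφ x) ^ 2) := by
  intro k₁ k₂ hk φ dφ hφ hφper hdφc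
  have hφc : Continuous φ := continuous_iff_continuousAt.mpr fun x => (hφ x).continuousAt
  set a : ℕ → ℝ := fun p => ∫ x in (0:ℝ)..1, n p x * (dw (p+1) x) ^ 2 with ha_def
  set C := ∫ x in (0:ℝ)..1, (dφ x) ^ 2 with hC_def
  have hC : 0 ≤ C := intervalIntegral.integral_nonneg zero_le_one fun x _ => sq_nonneg _
  have hann : ∀ p, 0 ≤ a p := fun p => intervalIntegral.integral_nonneg zero_le_one
    fun x _ => mul_nonneg (hnpos p x) (sq_nonneg _)
  set b : ℕ → ℝ := fun p => ∫ x in (0:ℝ)..1, n p x * dw (p+1) x * dφ x with hb_def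
  -- scheme step
  have hstep : ∀ p, (∫ x in (0:ℝ)..1, (n (p+1) x - n p x) * φ x) = Δt * b p := by
    intro p
    have h := hscheme p φ dφ hφ hφper hdφc
    rw [div_eq_iff (ne_of_gt hΔt)] at h
    rw [h]; ring
  -- telescoping
  set F : ℕ → ℝ := fun k => ∫ x in (0:ℝ)..1, n k x * φ x with hF
  have hint : ∀ k, IntervalIntegrable (fun x => n k x * φ x) volume 0 1 :=
    fun k => ((hncont k).mul hφc).intervalIntegrable _ _
  have e : ∀ k m : ℕ, (∫ x in (0:ℝ)..1, (n k x - n m x) * φ x) = F k - F m := by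
    intro k m
    simp only [sub_mul]
    exact intervalIntegral.integral_sub (hint k) (hint m)
  have hI : (∫ x in (0:ℝ)..1, (n k₂ x - n k₁ x) * φ x)
      = Δt * ∑ p ∈ Finset.Ico k₁ k₂, b p := by
    rw [e, ← telescope_Ico F k₁ k₂ hk.le, Finset.mul_sum]
    exact Finset.sum_congr rfl fun p _ => by rw [← hstep p, e]
  -- per-term Cauchy-Schwarz
  have hbp : ∀ p, |b p| ≤ Real.sqrt (a p) * (Real.sqrt M * Real.sqrt C) := by
    intro p
    have hcs := integral_cs (fun x => Real.sqrt (n p x) * dw (p+1) x)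
      (fun x => Real.sqrt (n p x) * dφ x)
      (((hncont p).sqrt).mul (hdwcont (p+1)))
      (((hncont p).sqrt).mul hdφc)
    have e1 : ∀ x : ℝ, (Real.sqrt (n p x) * dw (p+1) x) * (Real.sqrt (n p x) * dφ x)
        = n p x * dw (p+1) x * dφ x := by
      intro x
      rw [show (Real.sqrt (n p x) * dw (p+1) x) * (Real.sqrt (n p x) * dφ x)
          = (Real.sqrt (n p x) * Real.sqrt (n p x)) * (dw (p+1) x * dφ x) by ring,
        Real.mul_self_sqrt (hnpos p x)]
      ring
    have e2 : ∀ x : ℝ, (Real.sqrt (n p x) * dw (p+1) x) ^ 2 = n p x * (dw (p+1) x) ^ 2 := by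
      intro x; rw [mul_pow, Real.sq_sqrt (hnpos p x)]
    have e3 : ∀ x : ℝ, (Real.sqrt (n p x) * dφ x) ^ 2 = n p x * (dφ x) ^ 2 := by
      intro x; rw [mul_pow, Real.sq_sqrt (hnpos p x)]
    simp only [e1, e2, e3] at hcs
    have h2 : (∫ x in (0:ℝ)..1, n p x * (dφ x) ^ 2) ≤ M * C := by
      have := intervalIntegral.integral_mono_on (μ := volume) zero_le_one
        (((hncont p).mul (hdφc.pow 2)).intervalIntegrable _ _)
        ((continuous_const.mul (hdφc.pow 2)).intervalIntegrable _ _)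
        (fun x _ => mul_le_mul_of_nonneg_right (hnbound p x) (sq_nonneg (dφ x)))
      simp only [Pi.mul_apply, Pi.pow_apply] at this
      rwa [intervalIntegral.integral_const_mul] at this
    have hsq : (b p) ^ 2 ≤ a p * (M * C) :=
      le_trans hcs (mul_le_mul_of_nonneg_left h2 (hann p))
    calc |b p| = Real.sqrt ((b p) ^ 2) := (Real.sqrt_sq_eq_abs _).symm
      _ ≤ Real.sqrt (a p * (M * C)) := Real.sqrt_le_sqrt hsq
      _ = Real.sqrt (a p) * (Real.sqrt M * Real.sqrt C) := by
          rw [Real.sqrt_mul (hann p), Real.sqrt_mul hM]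
  -- sum bounds
  set S := ∑ p ∈ Finset.Ico k₁ k₂, a p with hS_def
  have hScard : (Finset.Ico k₁ k₂).card = k₂ - k₁ := Nat.card_Ico k₁ k₂
  set N : ℕ := k₂ - k₁ with hN
  have hsqa : ∑ p ∈ Finset.Ico k₁ k₂, Real.sqrt (a p) ≤ Real.sqrt ((N : ℝ) * S) := by
    have hnn : 0 ≤ ∑ p ∈ Finset.Ico k₁ k₂, Real.sqrt (a p) :=
      Finset.sum_nonneg fun p _ => Real.sqrt_nonneg _
    have hcs2 := Finset.sum_mul_sq_le_sq_mul_sq (Finset.Ico k₁ k₂)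
      (fun _ => (1:ℝ)) (fun p => Real.sqrt (a p))
    simp only [one_mul, one_pow, Finset.sum_const, nsmul_eq_mul, mul_one] at hcs2
    have hsq2 : ∀ p ∈ Finset.Ico k₁ k₂, Real.sqrt (a p) ^ 2 = a p :=
      fun p _ => Real.sq_sqrt (hann p)
    rw [Finset.sum_congr rfl hsq2, hScard] at hcs2
    calc ∑ p ∈ Finset.Ico k₁ k₂, Real.sqrt (a p)
        = Real.sqrt ((∑ p ∈ Finset.Ico k₁ k₂, Real.sqrt (a p)) ^ 2) :=
          (Real.sqrt_sq hnn).symm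
      _ ≤ Real.sqrt ((N : ℝ) * S) := Real.sqrt_le_sqrt hcs2
  have hSE : Δt * S ≤ E := by
    have h1 : S ≤ ∑' j, a j := Summable.sum_le_tsum _ (fun i _ => hann i) hdissum
    calc Δt * S ≤ Δt * ∑' j, a j := mul_le_mul_of_nonneg_left h1 hΔt.le
      _ ≤ E := hdissip
  have hΔsqrt : Δt * Real.sqrt ((N : ℝ) * S) ≤ Real.sqrt ((N : ℝ) * Δt) * Real.sqrt E := by
    have hNnn : (0:ℝ) ≤ (N : ℝ) := Nat.cast_nonneg _
    have hSnn : 0 ≤ S := Finset.sum_nonneg fun p _ => hann p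
    have h1 : Δt * Real.sqrt S ≤ Real.sqrt Δt * Real.sqrt E := by
      have e4 : Δt * Real.sqrt S = Real.sqrt Δt * Real.sqrt (Δt * S) := by
        rw [Real.sqrt_mul hΔt.le, ← mul_assoc, Real.mul_self_sqrt hΔt.le]
      rw [e4]
      exact mul_le_mul_of_nonneg_left (Real.sqrt_le_sqrt hSE) (Real.sqrt_nonneg _)
    rw [Real.sqrt_mul hNnn, Real.sqrt_mul hNnn]
    calc Δt * (Real.sqrt (N:ℝ) * Real.sqrt S)
        = Real.sqrt (N:ℝ) * (Δt * Real.sqrt S) := by ring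
      _ ≤ Real.sqrt (N:ℝ) * (Real.sqrt Δt * Real.sqrt E) :=
          mul_le_mul_of_nonneg_left h1 (Real.sqrt_nonneg _)
      _ = Real.sqrt (N:ℝ) * Real.sqrt Δt * Real.sqrt E := by ring
  -- combine
  have hcast : ((k₂ : ℝ) - (k₁ : ℝ)) = (N : ℝ) := by
    rw [hN, Nat.cast_sub hk.le]
  rw [hI, hcast, abs_mul, abs_of_pos hΔt]
  calc Δt * |∑ p ∈ Finset.Ico k₁ k₂, b p|
      ≤ Δt * ∑ p ∈ Finset.Ico k₁ k₂, |b p| :=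
        mul_le_mul_of_nonneg_left (Finset.abs_sum_le_sum_abs _ _) hΔt.le
    _ ≤ Δt * ∑ p ∈ Finset.Ico k₁ k₂, Real.sqrt (a p) * (Real.sqrt M * Real.sqrt C) :=
        mul_le_mul_of_nonneg_left (Finset.sum_le_sum fun p _ => hbp p) hΔt.le
    _ = (Δt * ∑ p ∈ Finset.Ico k₁ k₂, Real.sqrt (a p)) * (Real.sqrt M * Real.sqrt C) := by
        rw [← Finset.sum_mul]; ring
    _ ≤ (Δt * Real.sqrt ((N : ℝ) * S)) * (Real.sqrt M * Real.sqrt C) := by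
        apply mul_le_mul_of_nonneg_right _ (mul_nonneg (Real.sqrt_nonneg _) (Real.sqrt_nonneg _))
        exact mul_le_mul_of_nonneg_left hsqa hΔt.le
    _ ≤ (Real.sqrt ((N : ℝ) * Δt) * Real.sqrt E) * (Real.sqrt M * Real.sqrt C) := by
        apply mul_le_mul_of_nonneg_right hΔsqrt
          (mul_nonneg (Real.sqrt_nonneg _) (Real.sqrt_nonneg _))
    _ = Real.sqrt M * Real.sqrt E * Real.sqrt ((N : ℝ) * Δt) * Real.sqrt C := by ring
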